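/- arXiv:1601.07131 — 7 statements merged into one kernel-verified Lean document; each statement's English description precedes it below -/
import Mathlib

section
/- Let B be a left brace, a,b ∈ B, and define e_1(a,b) = a*b, e_{m+1}(a,b) = a*e_m(a,b). Then for every positive integer m, L_{a^m}(b) = b + Σ_{i=1}^m C(m,i) e_i(a,b), where C(m,i) is the binomial coefficient. -/
/-- A left brace: an abelian group `(B,+)` and a group `(B,·)` with the
compatibility law `a·(b+c) + a = a·b + a·c`. -/
class LeftBrace (B : Type*) extends AddCommGroup B, Group B where
  left_compat : ∀ a b c : B, a * (b + c) + a = a * b + a * c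

variable {B : Type*} [LeftBrace B]

/-- The star operation `a * b = a·b - a - b` of a left brace. -/
def bstar (a b : B) : B := a * b - a - b

/-- The map `L_a : b ↦ a·b - a`. -/
def lmap (a b : B) : B := a * b - a

/-- The socle of a left brace. -/
def socle (B : Type*) [LeftBrace B] : Set B := {a : B | ∀ b : B, a * b = a + b}

/-- Iterated star products: `eStar a b m = a*(a*(⋯*(a*b)))` with `a` occurring `m` times. -/
def eStar (a : B) (b : B) : ℕ → B
  | 0 => b
  | k + 1 => bstar a (eStar a b k)

/-- The additive subgroup generated by all `a*c` with `a ∈ A`, `c ∈ C`. -/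
def starSub (A C : AddSubgroup B) : AddSubgroup B :=
  AddSubgroup.closure {x : B | ∃ a ∈ A, ∃ c ∈ C, x = bstar a c}

/-- Rump's left chain: `leftPow B n = B^{n+1}`, i.e. `B^1 = B`, `B^{n+1} = B * B^n`. -/
def leftPow (B : Type*) [LeftBrace B] : ℕ → AddSubgroup B
  | 0 => ⊤
  | n + 1 => starSub ⊤ (leftPow B n)

/-- Rump's right chain: `rightPow B n = B^{(n+1)}`, i.e. `B^{(1)} = B`, `B^{(n+1)} = B^{(n)} * B`. -/
def rightPow (B : Type*) [LeftBrace B] : ℕ → AddSubgroup B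
  | 0 => ⊤
  | n + 1 => starSub (rightPow B n) ⊤

/-- The commutator `[g,h] = g⁻¹h⁻¹gh`. -/
def pcomm {G : Type*} [Group G] (g h : G) : G := g⁻¹ * h⁻¹ * g * h

/-- Iterated commutator `engel g h n = [[…[[g,h],h]…],h]` with `h` occurring `n` times. -/
def engel {G : Type*} [Group G] (g h : G) : ℕ → G
  | 0 => g
  | k + 1 => pcomm (engel g h k) h

/-- A group is Engel if every iterated commutator eventually vanishes. -/
def IsEngelGroup (G : Type*) [Group G] : Prop :=
  ∀ g h : G, ∃ n : ℕ, 0 < n ∧ engel g h n = 1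


lemma lmap_add' (a b c : B) : lmap a (b + c) = lmap a b + lmap a c := by
  have h := LeftBrace.left_compat a b c
  have h2 : a * (b + c) = a * b + a * c - a := by rw [eq_sub_iff_add_eq]; exact h
  simp only [lmap, h2]; abel

/-- `L_a` as an additive monoid homomorphism. -/
def lmapHom (a : B) : B →+ B := AddMonoidHom.mk' (lmap a) (lmap_add' a)

lemma lmapHom_apply (a b : B) : lmapHom a b = lmap a b := rfl

lemma lmap_mul' (x y b : B) : lmap (x * y) b = lmap x (lmap y b) := by
  have h : lmap x (y * b - y) = lmap x (y * b) - lmap x y := by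
    rw [← lmapHom_apply, ← lmapHom_apply, ← lmapHom_apply, map_sub]
  simp only [lmap] at h ⊢
  rw [h, mul_assoc]; abel

lemma lmap_eq_add_bstar (a x : B) : lmap a x = x + bstar a x := by
  simp only [lmap, bstar]; abel

lemma key_sum (a b : B) (n : ℕ) :
    eStar a b 1 + ∑ i ∈ Finset.Icc 1 n, n.choose i • (eStar a b i + eStar a b (i + 1)) =
      ∑ i ∈ Finset.Icc 1 (n + 1), (n + 1).choose i • eStar a b i := by
  rw [← Finset.Ico_add_one_right_eq_Icc, ← Finset.Ico_add_one_right_eq_Icc, Finset.sum_Ico_eq_sum_range,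
    Finset.sum_Ico_eq_sum_range]
  simp only [Nat.succ_sub_one, Nat.succ_eq_add_one, Nat.add_sub_cancel,
    show ∀ i : ℕ, 1 + i = i + 1 from fun i => Nat.add_comm 1 i]
  simp only [Nat.choose_succ_succ, add_smul, smul_add, Finset.sum_add_distrib,
    Finset.sum_range_succ' (fun i => n.choose i • eStar a b (i + 1)) n,
    Finset.sum_range_succ (fun i => n.choose (i + 1) • eStar a b (i + 1)) n,
    Nat.choose_self, Nat.choose_zero_right, Nat.choose_succ_self, one_smul, zero_smul, add_zero]
  abel


theorem stmt3 {B : Type*} [LeftBrace B] (a b : B) (m : ℕ) (hm : 1 ≤ m) :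
    lmap (a ^ m) b = b + ∑ i ∈ Finset.Icc 1 m, (m.choose i) • eStar a b i := by
  induction m, hm using Nat.le_induction with
  | base =>
    simp [pow_one, Finset.Icc_self, lmap, eStar, bstar]

  | succ n hn ih =>
    rw [pow_succ', lmap_mul', ih, ← lmapHom_apply, map_add, map_sum]
    simp only [map_nsmul, lmapHom_apply, lmap_eq_add_bstar a (eStar a b _)]
    have : ∀ i, eStar a b i + bstar a (eStar a b i) = eStar a b i + eStar a b (i + 1) := by
      intro i; rfl
    simp only [this]
    rw [lmap_eq_add_bstar a b, show bstar a b = eStar a b 1 from rfl, add_assoc, key_sum]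
end

section
/- Let (X,r) be a finite non-degenerate involutive set-theoretic solution of the Yang–Baxter equation such that for all a,b ∈ X there exists a positive integer n with a*(a*(...a*(a*b)...)) = 0 (a occurring n times) in the canonical left brace G(X,r). Then (X,r) is the trivial solution, i.e. r(x,y) = (y,x) for all x,y ∈ X. -/
variable {B : Type*} [LeftBrace B]

def r12 {X : Type*} (r : X × X → X × X) : X × X × X → X × X × X :=
  fun p => ((r (p.1, p.2.1)).1, (r (p.1, p.2.1)).2, p.2.2)

def r23 {X : Type*} (r : X × X → X × X) : X × X × X → X × X × X :=
  fun p => (p.1, r p.2)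

/-- A non-degenerate involutive set-theoretic solution of the Yang–Baxter equation. -/
structure YBSolution (X : Type u) where
  r : X × X → X × X
  ybe : r12 r ∘ r23 r ∘ r12 r = r23 r ∘ r12 r ∘ r23 r
  nondegL : ∀ x : X, Function.Bijective fun y => (r (x, y)).1
  nondegR : ∀ y : X, Function.Bijective fun x => (r (x, y)).2
  involutive : ∀ p : X × X, r (r p) = p

/-- `G`, with its left brace structure and the map `ι : X → G`, is the structure group
`G(X,r)` with its canonical left brace structure: `ι` is injective, `(G,+)` is free
abelian with basis `ι(X)`, `ˣy = L_x(y)` holds, the defining relations hold, and `G`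
has the universal property of the group presented by these relations. -/
structure IsCanonicalBrace {X : Type u} (sol : YBSolution X) (G : Type u) [LeftBrace G]
    (ι : X → G) : Prop where
  inj : Function.Injective ι
  basis : ∃ b : Module.Basis X ℤ G, ∀ x : X, b x = ι x
  act : ∀ x y : X, lmap (ι x) (ι y) = ι (sol.r (x, y)).1
  rel : ∀ x y : X, ι x * ι y = ι (sol.r (x, y)).1 * ι (sol.r (x, y)).2
  univ : ∀ {H : Type u} [Group H] (f : X → H),
    (∀ x y : X, f x * f y = f (sol.r (x, y)).1 * f (sol.r (x, y)).2) →
    ∃! φ : G →* H, ∀ x : X, φ (ι x) = f x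

theorem stmt8 {X : Type u} [Finite X] (sol : YBSolution X)
    {G : Type u} [LeftBrace G] (ι : X → G) (hG : IsCanonicalBrace sol G ι)
    (hstar : ∀ a b : X, ∃ n : ℕ, 0 < n ∧ eStar (ι a) (ι b) n = 0) :
    ∀ p : X × X, sol.r p = (p.2, p.1) := by
  classical
  have lmap_add : ∀ g x y : G, lmap g (x + y) = lmap g x + lmap g y := by
    intro g x y
    have h := LeftBrace.left_compat g x y
    have h2 : g * (x + y) = g * x + g * y - g := by
      rw [eq_sub_iff_add_eq]; exact h
    simp only [lmap]
    rw [h2]; abel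
  obtain ⟨bas, hbas⟩ := hG.basis
  have key : ∀ a b0 : X, (sol.r (a, b0)).1 = b0 := by
    intro a b0
    set σ : X → X := fun y => (sol.r (a, y)).1 with hσdef
    have hbij : Function.Bijective σ := sol.nondegL a
    set σe : X ≃ X := Equiv.ofBijective σ hbij with hσe
    have hcoe : ⇑σe = σ := rfl
    have hper : b0 ∈ Function.periodicPts σ := by
      refine ⟨orderOf σe, orderOf_pos σe, ?_⟩
      show σ^[orderOf σe] b0 = b0
      rw [← hcoe, ← Equiv.Perm.coe_pow, pow_orderOf_eq_one σe]
      rfl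
    set m : ℕ := Function.minimalPeriod σ b0 with hmdef
    have hm : 0 < m := Function.minimalPeriod_pos_of_mem_periodicPts hper
    set ζ : ℂ := Complex.exp (2 * Real.pi * Complex.I / m) with hζdef
    have hζ : IsPrimitiveRoot ζ m := Complex.isPrimitiveRoot_exp m hm.ne'
    have hζm : ζ ^ m = 1 := hζ.pow_eq_one
    have hmod : ∀ i : ℕ, ζ ^ i = ζ ^ (i % m) := by
      intro i
      conv_lhs => rw [← Nat.div_add_mod i m]
      rw [pow_add, pow_mul, hζm, one_pow, one_mul]
    have heq : ∀ i j : ℕ, σ^[i] b0 = σ^[j] b0 → ζ ^ i = ζ ^ j := by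
      intro i j hij
      rw [hmod i, hmod j]
      have hinj := Function.iterate_injOn_Iio_minimalPeriod (f := σ) (x := b0)
      have hij2 : i % m = j % m := by
        refine hinj (Set.mem_Iio.mpr (Nat.mod_lt _ hm)) (Set.mem_Iio.mpr (Nat.mod_lt _ hm)) ?_
        show σ^[i % m] b0 = σ^[j % m] b0
        rw [Function.iterate_mod_minimalPeriod_eq, Function.iterate_mod_minimalPeriod_eq]
        exact hij
      rw [hij2]
    set f : X → ℂ := fun y => if h : ∃ i : ℕ, σ^[i] b0 = y then ζ ^ h.choose else 0 with hfdef
    have hf : ∀ i : ℕ, f (σ^[i] b0) = ζ ^ i := by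
      intro i
      have hex : ∃ j : ℕ, σ^[j] b0 = σ^[i] b0 := ⟨i, rfl⟩
      simp only [hfdef, dif_pos hex]
      exact heq _ _ hex.choose_spec
    have hstep : ∀ y : X, f (σ y) = ζ * f y := by
      intro y
      by_cases hy : ∃ i : ℕ, σ^[i] b0 = y
      · obtain ⟨i, rfl⟩ := hy
        have h1 : σ (σ^[i] b0) = σ^[i + 1] b0 := (Function.iterate_succ_apply' σ i b0).symm
        rw [h1, hf, hf, pow_succ, mul_comm]
      · have hny : ∀ j : ℕ, σ^[j] b0 ≠ σ y := by
          intro j hj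
          cases j with
          | zero =>
            apply hy
            refine ⟨m - 1, hbij.1 ?_⟩
            rw [← Function.iterate_succ_apply' σ (m - 1) b0, Nat.succ_eq_add_one,
              Nat.sub_add_cancel hm]
            rw [Function.iterate_minimalPeriod]
            exact hj
          | succ k =>
            apply hy
            exact ⟨k, hbij.1 (by rw [← Function.iterate_succ_apply' σ k b0]; exact hj)⟩
        have h1 : f (σ y) = 0 := by
          simp only [hfdef]
          rw [dif_neg]
          push_neg
          exact hny
        have h2 : f y = 0 := by
          simp only [hfdef]
          rw [dif_neg hy]
        rw [h1, h2, mul_zero]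
    set φ : G →ₗ[ℤ] ℂ := bas.constr ℤ f with hφdef
    have hφb : ∀ x : X, φ (ι x) = f x := by
      intro x
      rw [← hbas x]
      exact bas.constr_basis ℤ f x
    set L : G →+ G := AddMonoidHom.mk' (lmap (ι a)) (lmap_add (ι a)) with hLdef
    have hφL : ∀ v : G, φ (lmap (ι a) v) = ζ * φ v := by
      have hcomp : φ.comp L.toIntLinearMap = ζ • φ := by
        apply bas.ext
        intro x
        have h1 : L (bas x) = ι (sol.r (a, x)).1 := by
          rw [hbas x]
          show lmap (ι a) (ι x) = _
          exact hG.act a x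
        simp only [LinearMap.comp_apply, LinearMap.smul_apply, AddMonoidHom.coe_toIntLinearMap]
        rw [h1, hφb, hbas, hφb]
        exact hstep x
      intro v
      have := LinearMap.congr_fun hcomp v
      exact (by simpa using this : φ (L v) = ζ * φ v)
    have hφstar : ∀ v : G, φ (bstar (ι a) v) = (ζ - 1) * φ v := by
      intro v
      have h1 : bstar (ι a) v = lmap (ι a) v - v := rfl
      rw [h1, map_sub, hφL, sub_mul, one_mul]
    have hE : ∀ n : ℕ, φ (eStar (ι a) (ι b0) n) = (ζ - 1) ^ n * φ (ι b0) := by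
      intro n
      induction n with
      | zero => simp [eStar]
      | succ k ih =>
        show φ (bstar (ι a) (eStar (ι a) (ι b0) k)) = _
        rw [hφstar, ih, pow_succ]
        ring
    have hfb0 : f b0 = 1 := by
      have := hf 0
      simpa using this
    obtain ⟨n, hn, h0⟩ := hstar a b0
    have hz : (ζ - 1) ^ n = 0 := by
      have h1 := hE n
      rw [h0, map_zero, hφb, hfb0, mul_one] at h1
      exact h1.symm
    have hζ1 : ζ = 1 := by
      have := pow_eq_zero_iff hn.ne' |>.mp hz
      exact sub_eq_zero.mp this
    have hm1 : m = 1 := by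
      have hd : m ∣ 1 := hζ.dvd_of_pow_eq_one 1 (by rw [hζ1, one_pow])
      exact Nat.dvd_one.mp hd
    have hfix : σ^[m] b0 = b0 := Function.iterate_minimalPeriod
    rw [hm1] at hfix
    simpa using hfix
  intro p
  obtain ⟨x, y⟩ := p
  have h1 : (sol.r (x, y)).1 = y := key x y
  have hr : sol.r (x, y) = (y, (sol.r (x, y)).2) := Prod.ext h1 rfl
  have h2 := sol.involutive (x, y)
  rw [hr] at h2
  have h3 : (sol.r (y, (sol.r (x, y)).2)).1 = (sol.r (x, y)).2 := key y _
  rw [h2] at h3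
  rw [hr]
  exact Prod.ext rfl h3.symm
end

section
/- Let (X,r) be a finite non-degenerate involutive set-theoretic solution of the Yang–Baxter equation whose canonical left brace G(X,r) is left nilpotent (i.e. G^n = 0 for some n, where G^1 = G and G^{n+1} = G * G^n). Then (X,r) is the trivial solution. -/
variable {B : Type*} [LeftBrace B]

section MyAux

lemma my_bstar_add (a g h : B) : bstar a (g + h) = bstar a g + bstar a h := by
  have hc := LeftBrace.left_compat a g h
  have h2 : a * (g + h) = a * g + a * h - a := eq_sub_of_add_eq hc
  simp only [bstar, h2]
  abel

lemma my_bstar_mem_leftPow (a c : B) {m : ℕ} (hc : c ∈ leftPow B m) :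
    bstar a c ∈ leftPow B (m + 1) :=
  AddSubgroup.subset_closure ⟨a, trivial, c, hc, rfl⟩

end MyAux

theorem stmt9 {X : Type u} [Finite X] (sol : YBSolution X)
    {G : Type u} [LeftBrace G] (ι : X → G) (hG : IsCanonicalBrace sol G ι)
    (hnil : ∃ n : ℕ, leftPow G n = ⊥) :
    ∀ p : X × X, sol.r p = (p.2, p.1) := by
  classical
  obtain ⟨n, hn⟩ := hnil
  obtain ⟨b, hb⟩ := hG.basis
  have key : ∀ x y : X, (sol.r (x, y)).1 = y := by
    intro x y
    by_contra hne
    set σ : X → X := fun z => (sol.r (x, z)).1 with hσdef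
    have hσ : Function.Bijective σ := sol.nondegL x
    -- every point is periodic
    have hper : ∃ k, 0 < k ∧ σ^[k] y = y := by
      let e : Equiv.Perm X := Equiv.ofBijective σ hσ
      refine ⟨orderOf e, orderOf_pos e, ?_⟩
      have : σ^[orderOf e] = ⇑(e ^ orderOf e) := (Equiv.Perm.coe_pow e _).symm
      rw [this, pow_orderOf_eq_one]; rfl
    obtain ⟨k, hkpos, hk⟩ := hper
    set d := Function.minimalPeriod σ y with hddef
    have hd0 : 0 < d := Function.IsPeriodicPt.minimalPeriod_pos hkpos hk
    have hdy : σ^[d] y = y := Function.iterate_minimalPeriod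
    have hd1 : d ≠ 1 := by
      intro h
      apply hne
      have := hdy
      rw [h] at this
      simpa using this
    have hd2 : 2 ≤ d := by omega
    -- the root of unity
    set ω : ℂ := Complex.exp (2 * Real.pi * Complex.I / d) with hωdef
    have hdC : (d : ℂ) ≠ 0 := Nat.cast_ne_zero.mpr (by omega)
    have hωd : ω ^ d = 1 := by
      rw [hωdef, ← Complex.exp_nat_mul, mul_div_cancel₀ _ hdC, Complex.exp_two_pi_mul_I]
    have hω1 : ω ≠ 1 := by
      intro h
      rw [hωdef, Complex.exp_eq_one_iff] at h
      obtain ⟨m, hm⟩ := h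
      have h2pi : (2 * Real.pi * Complex.I : ℂ) ≠ 0 := by
        simp [Real.pi_ne_zero, Complex.I_ne_zero]
      have hmd : (m : ℂ) * d = 1 := by
        field_simp at hm
        have h' : ((m : ℂ) * d) * (2 * Real.pi * Complex.I) = 1 * (2 * Real.pi * Complex.I) := by
          linear_combination (-(2 * Real.pi * Complex.I : ℂ)) * hm
        exact mul_right_cancel₀ h2pi h'
      have hmd' : m * (d : ℤ) = 1 := by exact_mod_cast hmd
      have : (d : ℤ) ∣ 1 := ⟨m, by linarith [mul_comm m (d : ℤ)]⟩
      have := Int.le_of_dvd one_pos this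
      omega
    -- the weight function
    set w : X → ℂ := fun z => if h : ∃ m, σ^[m] y = z then ω ^ (Nat.find h) else 0 with hwdef
    have hwk : ∀ k : ℕ, w (σ^[k] y) = ω ^ k := by
      intro k
      have hex : ∃ m, σ^[m] y = σ^[k] y := ⟨k, rfl⟩
      have hw1 : w (σ^[k] y) = ω ^ (Nat.find hex) := by
        rw [hwdef]; simp only [dif_pos hex]
      set m0 := Nat.find hex with hm0def
      have hm0k : m0 ≤ k := Nat.find_le rfl
      have hm0 : σ^[m0] y = σ^[k] y := Nat.find_spec hex
      have hsplit : σ^[m0] (σ^[k - m0] y) = σ^[m0] y := by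
        rw [← Function.iterate_add_apply]
        rw [show m0 + (k - m0) = k by omega]
        exact hm0.symm
      have hcanc : σ^[k - m0] y = y := (hσ.injective.iterate m0) hsplit
      have hdvd : d ∣ (k - m0) := Function.IsPeriodicPt.minimalPeriod_dvd hcanc
      obtain ⟨q, hq⟩ := hdvd
      have : ω ^ k = ω ^ m0 := by
        rw [show k = m0 + (k - m0) by omega, pow_add, hq, pow_mul, hωd, one_pow, mul_one]
      rw [hw1, this]
    have hworb : ∀ z : X, w (σ z) = ω * w z := by
      intro z
      by_cases h : ∃ m, σ^[m] y = z
      · obtain ⟨m, hm⟩ := h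
        rw [← hm, ← Function.iterate_succ_apply' σ m y, hwk, hwk, pow_succ, mul_comm]
      · have hz : w z = 0 := by rw [hwdef]; simp only [dif_neg h]
        have hsz : ¬ ∃ m, σ^[m] y = σ z := by
          rintro ⟨m, hm⟩
          rcases Nat.eq_zero_or_pos m with hm0 | hm0
          · subst hm0
            apply h
            refine ⟨d - 1, hσ.injective ?_⟩
            rw [← Function.iterate_succ_apply' σ (d-1) y, show (d-1).succ = d by omega, hdy]
            exact hm
          · apply h
            refine ⟨m - 1, hσ.injective ?_⟩
            rw [← Function.iterate_succ_apply' σ (m-1) y, show (m-1).succ = m by omega]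
            exact hm
        have : w (σ z) = 0 := by rw [hwdef]; simp only [dif_neg hsz]
        rw [this, hz, mul_zero]
    -- the linear functional
    set ψ : G →ₗ[ℤ] ℂ := (Finsupp.linearCombination ℤ w).comp b.repr.toLinearMap with hψdef
    have hψb : ∀ z : X, ψ (b z) = w z := by
      intro z
      rw [hψdef]
      simp [Finsupp.linearCombination_single]
    -- the star operator
    set T : G →+ G := AddMonoidHom.mk' (fun g => bstar (ι x) g) (my_bstar_add (ι x)) with hTdef
    have hTb : ∀ z : X, T (b z) = b (σ z) - b z := by
      intro z
      show bstar (ι x) (b z) = b (σ z) - b z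
      simp only [hb]
      have hact := hG.act x z
      simp only [bstar, lmap] at hact ⊢
      simp only [hσdef]
      rw [← hact]
    have hψT : ∀ g : G, ψ (T g) = (ω - 1) * ψ g := by
      have heq : ψ.comp T.toIntLinearMap = (ω - 1) • ψ := by
        apply Module.Basis.ext b
        intro z
        simp only [LinearMap.comp_apply, LinearMap.smul_apply, smul_eq_mul]
        rw [show T.toIntLinearMap (b z) = T (b z) from rfl, hTb z, map_sub, hψb, hψb, hworb]
        ring
      intro g
      have := LinearMap.congr_fun heq g
      simpa [smul_eq_mul] using this
    have hiter : ∀ (m : ℕ) (g : G), ψ ((⇑T)^[m] g) = (ω - 1) ^ m * ψ g := by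
      intro m
      induction m with
      | zero => intro g; simp
      | succ m ih =>
        intro g
        rw [Function.iterate_succ_apply', hψT, ih, pow_succ]
        ring
    have hmem : ∀ (m : ℕ) (g : G), (⇑T)^[m] g ∈ leftPow G m := by
      intro m
      induction m with
      | zero => intro g; trivial
      | succ m ih =>
        intro g
        rw [Function.iterate_succ_apply']
        exact my_bstar_mem_leftPow (ι x) ((⇑T)^[m] g) (ih g)
    have h0 : (⇑T)^[n] (b y) = 0 := by
      have := hmem n (b y)
      rw [hn] at this
      simpa using this
    have h1 := hiter n (b y)
    rw [h0, map_zero, hψb] at h1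
    have hwy : w y = 1 := by
      have := hwk 0
      simpa using this
    rw [hwy, mul_one] at h1
    have := (pow_eq_zero_iff' (M₀ := ℂ)).mp h1.symm
    exact hω1 (sub_eq_zero.mp this.1)
  intro p
  obtain ⟨x, y⟩ := p
  have h1 : (sol.r (x, y)).1 = y := key x y
  have h2 := sol.involutive (x, y)
  have h3 : (sol.r (sol.r (x, y))).1 = (sol.r (x, y)).2 := by
    have : sol.r (x, y) = ((sol.r (x, y)).1, (sol.r (x, y)).2) := rfl
    rw [this, key]
  rw [h2] at h3
  exact Prod.ext h1 h3.symm
end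

section
/- Let (X,r) be a finite non-degenerate involutive set-theoretic solution of the Yang–Baxter equation. If the structure group G(X,r) is an Engel group, then (X,r) is the trivial solution. -/
variable {B : Type*} [LeftBrace B]

namespace LB
variable {G : Type*} [LeftBrace G]

lemma mul_zero' (a : G) : a * (0 : G) = a := by
  have h := LeftBrace.left_compat a 0 0
  rw [add_zero] at h
  exact (add_left_cancel h).symm

lemma zero_eq_one : (0 : G) = 1 := by
  have := mul_zero' (1 : G)
  rwa [one_mul] at this

lemma mul_eq_add_lmap (a b : G) : a * b = a + lmap a b := by
  simp [lmap]

lemma lmap_add (a b c : G) : lmap a (b + c) = lmap a b + lmap a c := by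
  have h := LeftBrace.left_compat a b c
  have h2 : a * (b + c) = a * b + a * c - a := by rw [eq_sub_iff_add_eq, h]
  simp only [lmap]; rw [h2]; abel

lemma lmap_zero (a : G) : lmap a 0 = 0 := by
  rw [lmap, mul_zero', sub_self]

lemma lmap_one' (c : G) : lmap 1 c = c := by
  simp [lmap, ← zero_eq_one]

lemma lmap_mul (a b c : G) : lmap (a * b) c = lmap a (lmap b c) := by
  have h := LeftBrace.left_compat a (b * c - b) b
  rw [sub_add_cancel] at h
  have h2 : a * (b * c - b) = a * (b * c) + a - a * b := by
    rw [eq_sub_iff_add_eq, ← h]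
  simp only [lmap, mul_assoc]; rw [h2]; abel

lemma lmap_inv_lmap (a c : G) : lmap a⁻¹ (lmap a c) = c := by
  rw [← lmap_mul, inv_mul_cancel, lmap_one']

lemma lmap_lmap_inv (a c : G) : lmap a (lmap a⁻¹ c) = c := by
  rw [← lmap_mul, mul_inv_cancel, lmap_one']

/-- `lmap a` as an additive hom. -/
def lhom (a : G) : G →+ G where
  toFun := lmap a
  map_zero' := lmap_zero a
  map_add' := lmap_add a

@[simp] lemma lhom_apply (a b : G) : lhom a b = lmap a b := rfl

lemma lmap_neg (a b : G) : lmap a (-b) = - lmap a b := (lhom a).map_neg b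
lemma lmap_nsmul (a : G) (m : ℕ) (b : G) : lmap a (m • b) = m • lmap a b :=
  (lhom a).map_nsmul m b

lemma mem_socle_iff (s : G) : s ∈ socle G ↔ ∀ b, lmap s b = b := by
  constructor
  · intro h b; rw [lmap, h b]; abel
  · intro h b; rw [mul_eq_add_lmap, h b]

lemma socle_mul {s t : G} (hs : s ∈ socle G) (ht : t ∈ socle G) : s * t ∈ socle G := by
  rw [mem_socle_iff] at *
  intro b; rw [lmap_mul, ht, hs]

lemma socle_inv {s : G} (hs : s ∈ socle G) : s⁻¹ ∈ socle G := by
  rw [mem_socle_iff] at *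
  intro b
  have := lmap_inv_lmap s b
  rwa [hs b] at this

lemma socle_one : (1 : G) ∈ socle G := by
  rw [mem_socle_iff]; exact lmap_one'

lemma socle_inv_eq_neg {s : G} (hs : s ∈ socle G) : s⁻¹ = -s := by
  have : s * (-s) = 1 := by rw [hs (-s), add_neg_cancel, zero_eq_one]
  exact inv_eq_of_mul_eq_one_right this

lemma socle_zero : (0 : G) ∈ socle G := by rw [zero_eq_one]; exact socle_one

lemma socle_add {s t : G} (hs : s ∈ socle G) (ht : t ∈ socle G) : s + t ∈ socle G := by
  have := socle_mul hs ht
  rwa [hs t] at this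

lemma socle_neg {s : G} (hs : s ∈ socle G) : -s ∈ socle G := by
  have := socle_inv hs
  rwa [socle_inv_eq_neg hs] at this

lemma socle_normal {s : G} (hs : s ∈ socle G) (g : G) : g⁻¹ * s * g ∈ socle G := by
  rw [mem_socle_iff] at *
  intro b
  rw [lmap_mul, lmap_mul, hs, lmap_inv_lmap]

lemma pcomm_socle {g s : G} (hs : s ∈ socle G) : pcomm g s = s - lmap g⁻¹ s := by
  have h1 : pcomm g s = g⁻¹ * (s⁻¹ * (g * s)) := by rw [pcomm]; group
  rw [h1, mul_eq_add_lmap g s, socle_inv hs _, socle_inv_eq_neg hs,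
    mul_eq_add_lmap g⁻¹ _, lmap_add, lmap_add, lmap_neg]
  have h2 : g⁻¹ + lmap g⁻¹ g = 1 := by rw [← mul_eq_add_lmap, inv_mul_cancel]
  rw [lmap_inv_lmap]
  rw [show g⁻¹ + (-lmap g⁻¹ s + (lmap g⁻¹ g + s)) = (g⁻¹ + lmap g⁻¹ g) + s - lmap g⁻¹ s
    from by abel, h2, ← zero_eq_one]
  abel

lemma pcomm_socle_mem {g s : G} (hs : s ∈ socle G) : pcomm g s ∈ socle G := by
  have h : pcomm g s = (g⁻¹ * s⁻¹ * g) * s := by rw [pcomm]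
  rw [h]
  exact socle_mul (socle_normal (socle_inv hs) g) hs

lemma pcomm_swap (g h : G) : pcomm h g = (pcomm g h)⁻¹ := by
  simp [pcomm]; group

lemma pcomm_socle' {g s : G} (hs : s ∈ socle G) : pcomm s g = lmap g⁻¹ s - s := by
  rw [pcomm_swap, socle_inv_eq_neg (pcomm_socle_mem hs), pcomm_socle hs]
  abel

lemma pcomm_socle'_mem {g s : G} (hs : s ∈ socle G) : pcomm s g ∈ socle G := by
  rw [pcomm_swap]; exact socle_inv (pcomm_socle_mem hs)

lemma engel_socle {s : G} (hs : s ∈ socle G) (g : G) (n : ℕ) :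
    engel s g n ∈ socle G ∧ engel s g n = (fun h => lmap g⁻¹ h - h)^[n] s := by
  induction n with
  | zero => exact ⟨hs, rfl⟩
  | succ k ih =>
    refine ⟨pcomm_socle'_mem ih.1, ?_⟩
    rw [engel, pcomm_socle' ih.1, Function.iterate_succ_apply', ← ih.2]

end LB

open LB

lemma fix_of_nilpotent {A : Type*} [AddCommGroup A]
    (htf : ∀ (m : ℕ) (k : A), 0 < m → m • k = 0 → k = 0)
    (f : A →+ A) (d : ℕ) (hd : 0 < d) (hfd : ∀ k, (⇑f)^[d] k = k) :
    ∀ (n : ℕ) (h : A), (fun h => f h - h)^[n] h = 0 → f h = h := by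
  intro n
  induction n with
  | zero =>
    intro h h0
    simp only [Function.iterate_zero, id] at h0
    rw [h0, map_zero]
  | succ k ih =>
    intro h h0
    rw [Function.iterate_succ_apply] at h0
    have hk : f (f h - h) = f h - h := ih _ h0
    set c := f h - h with hc
    have hiter : ∀ j : ℕ, (⇑f)^[j] h = h + j • c := by
      intro j
      induction j with
      | zero => simp
      | succ i ihh =>
        rw [Function.iterate_succ_apply', ihh, map_add, AddMonoidHom.map_nsmul, hk,
          show f h = h + c from by rw [hc]; abel, succ_nsmul]
        abel
    have h1 := hiter d
    rw [hfd h] at h1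
    have hdc : d • c = 0 := by
      have h2 := h1.symm
      rwa [add_eq_left] at h2
    have h3 : c = 0 := htf d c hd hdc
    rw [hc, sub_eq_zero] at h3
    exact h3

section Main
variable {X : Type u} [Finite X] (sol : YBSolution X) {G : Type u} [LeftBrace G]

omit [Finite X] in
lemma gen_top (ι : X → G) (hG : IsCanonicalBrace sol G ι) :
    Subgroup.closure (Set.range ι) = ⊤ := by
  set M := Subgroup.closure (Set.range ι) with hM
  have hmem : ∀ x : X, ι x ∈ M := fun x => Subgroup.subset_closure ⟨x, rfl⟩
  let f : X → M := fun x => ⟨ι x, hmem x⟩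
  have hf : ∀ x y : X, f x * f y = f (sol.r (x,y)).1 * f (sol.r (x,y)).2 := by
    intro x y
    apply Subtype.ext
    exact hG.rel x y
  obtain ⟨φ, hφ, _⟩ := hG.univ f hf
  obtain ⟨ψ, hψ, huniq⟩ := hG.univ ι hG.rel
  have h1 : M.subtype.comp φ = MonoidHom.id G := by
    have e1 := huniq (M.subtype.comp φ) (fun x => by simp [hφ x, f])
    have e2 := huniq (MonoidHom.id G) (fun x => rfl)
    rw [e1, e2]
  rw [eq_top_iff]
  intro g _
  have h2 := DFunLike.congr_fun h1 g
  simp only [MonoidHom.comp_apply, MonoidHom.id_apply, Subgroup.coe_subtype] at h2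
  rw [← h2]
  exact (φ g).2

omit [Finite X] in
lemma perm_exists (ι : X → G) (hG : IsCanonicalBrace sol G ι) (g : G) :
    ∃ q : Equiv.Perm X, ∀ y, lmap g (ι y) = ι (q y) := by
  have hg : g ∈ Subgroup.closure (Set.range ι) := by
    rw [gen_top sol ι hG]; trivial
  induction hg using Subgroup.closure_induction with
  | mem a ha =>
    obtain ⟨x, rfl⟩ := ha
    exact ⟨Equiv.ofBijective _ (sol.nondegL x), fun y => hG.act x y⟩
  | one => exact ⟨1, fun y => by rw [lmap_one']; rfl⟩
  | mul a c _ _ iha ihc =>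
    obtain ⟨qa, hqa⟩ := iha; obtain ⟨qc, hqc⟩ := ihc
    refine ⟨qc.trans qa, fun y => ?_⟩
    rw [lmap_mul, hqc, hqa]; rfl
  | inv a _ iha =>
    obtain ⟨qa, hqa⟩ := iha
    refine ⟨qa.symm, fun y => ?_⟩
    have h := hqa (qa.symm y)
    rw [Equiv.apply_symm_apply] at h
    rw [← h, lmap_inv_lmap]

end Main

theorem stmt10 {X : Type u} [Finite X] (sol : YBSolution X)
    {G : Type u} [LeftBrace G] (ι : X → G) (hG : IsCanonicalBrace sol G ι)
    (hE : IsEngelGroup G) :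
    ∀ p : X × X, sol.r p = (p.2, p.1) := by
  classical
  obtain ⟨b, hb⟩ := hG.basis
  -- torsion-freeness
  have htf : ∀ (m : ℕ) (k : G), 0 < m → m • k = 0 → k = 0 := by
    intro m k hm hmk
    have h1 : (m : ℤ) • k = 0 := by rwa [natCast_zsmul]
    have h2 := congrArg b.repr h1
    rw [map_smul, map_zero] at h2
    have hm' : (m : ℤ) ≠ 0 := by exact_mod_cast hm.ne'
    have h3 : b.repr k = 0 := (smul_eq_zero.mp h2).resolve_left hm'
    have := congrArg b.repr.symm h3
    rwa [LinearEquiv.symm_apply_apply, map_zero] at this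
  -- the permutation associated to each group element
  choose Φ hΦ using fun g => perm_exists sol ι hG g
  have Φuniq : ∀ (g : G) (q : Equiv.Perm X), (∀ y, lmap g (ι y) = ι (q y)) → q = Φ g := by
    intro g q hq
    ext y
    exact hG.inj (by rw [← hq y, hΦ g y])
  have Φmul : ∀ g h : G, Φ (g * h) = Φ g * Φ h := by
    intro g h
    exact (Φuniq _ _ fun y => by rw [lmap_mul, hΦ h y, hΦ g]; rfl).symm
  have Φone : Φ (1 : G) = 1 := (Φuniq 1 1 (fun y => by rw [lmap_one']; rfl)).symm
  have Φinv : ∀ g : G, Φ g⁻¹ = (Φ g)⁻¹ := by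
    intro g
    have := Φmul g⁻¹ g
    rw [inv_mul_cancel, Φone] at this
    exact eq_inv_of_mul_eq_one_left this.symm
  -- a map fixing the basis is trivial
  have lmap_eq_of_basis : ∀ g : G, (∀ y, lmap g (ι y) = ι y) → ∀ k, lmap g k = k := by
    intro g hgy k
    have he : (lhom g).toIntLinearMap = LinearMap.id := by
      apply b.ext
      intro y
      simp only [AddMonoidHom.coe_toIntLinearMap, LinearMap.id_coe, id_eq, hb y]
      exact hgy y
    have := congrArg (fun (F : G →ₗ[ℤ] G) => F k) he
    simpa using this
  have socle_of_Φ : ∀ g : G, Φ g = 1 → g ∈ socle G := by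
    intro g hg
    rw [mem_socle_iff]
    apply lmap_eq_of_basis
    intro y
    rw [hΦ g y, hg]; rfl
  haveI : Finite (Equiv.Perm X) := inferInstance
  -- Engel implies the socle is fixed pointwise by every lmap
  have key : ∀ s ∈ socle G, ∀ g : G, lmap g⁻¹ s = s := by
    intro s hs g
    obtain ⟨n, hn, hen⟩ := hE s g
    have h0 : (fun h => lmap g⁻¹ h - h)^[n] s = 0 := by
      rw [← (engel_socle hs g n).2, hen, zero_eq_one]
    set q := Φ g⁻¹ with hq
    set d := orderOf q with hdq
    have hd : 0 < d := orderOf_pos q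
    have hiterbasis : ∀ (j : ℕ) (y : X), (⇑(lhom g⁻¹))^[j] (ι y) = ι ((q ^ j) y) := by
      intro j
      induction j with
      | zero => intro y; simp
      | succ i ih =>
        intro y
        rw [Function.iterate_succ_apply', ih y, lhom_apply, hΦ g⁻¹, pow_succ']
        rfl
    have hfd : ∀ k, (⇑(lhom g⁻¹))^[d] k = k := by
      intro k
      let F : G →+ G := AddMonoidHom.mk' ((⇑(lhom g⁻¹))^[d]) (fun a c => iterate_map_add _ d a c)
      have he : F.toIntLinearMap = LinearMap.id := by
        apply b.ext
        intro y
        simp only [AddMonoidHom.coe_toIntLinearMap, LinearMap.id_coe, id_eq, hb y]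
        show (⇑(lhom g⁻¹))^[d] (ι y) = ι y
        rw [hiterbasis d y, pow_orderOf_eq_one q]
        rfl
      have := congrArg (fun (F : G →ₗ[ℤ] G) => F k) he
      exact (by simpa using this : F k = k)
    exact fix_of_nilpotent htf (lhom g⁻¹) d hd hfd n s h0
  have key2 : ∀ s ∈ socle G, ∀ g : G, lmap g s = s := by
    intro s hs g
    have h1 := key s hs g⁻¹
    rwa [inv_inv] at h1
  -- the socle as an additive subgroup
  let S : AddSubgroup G :=
    { carrier := socle G
      add_mem' := socle_add
      zero_mem' := socle_zero
      neg_mem' := socle_neg }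
  have wd : ∀ a c : G, -a + c ∈ socle G → Φ a = Φ c := by
    intro a c h
    have hac : c = a * (-a + c) := by
      rw [mul_eq_add_lmap, key2 _ h a]; abel
    have hΦs : Φ (-a + c) = 1 := by
      refine (Φuniq _ 1 fun y => ?_).symm
      rw [(mem_socle_iff _).mp h (ι y)]; rfl
    rw [hac, Φmul, hΦs, mul_one]
  let F : G ⧸ S → Equiv.Perm X := fun q =>
    Quotient.liftOn' q Φ (fun a c hac => wd a c (QuotientAddGroup.leftRel_apply.mp hac))
  have Finj : Function.Injective F := by
    intro a c
    induction a using QuotientAddGroup.induction_on with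
    | H a =>
    induction c using QuotientAddGroup.induction_on with
    | H c =>
    intro hFac
    have hΦac : Φ a = Φ c := hFac
    have h1 : Φ (a⁻¹ * c) = 1 := by rw [Φmul, Φinv, hΦac, inv_mul_cancel]
    have h2 : a⁻¹ * c ∈ socle G := socle_of_Φ _ h1
    have h4 : c = a + (a⁻¹ * c) := by
      have h5 : a * (a⁻¹ * c) = a + lmap a (a⁻¹ * c) := mul_eq_add_lmap a _
      rw [key2 _ h2 a] at h5
      rw [← h5, ← mul_assoc, mul_inv_cancel, one_mul]
    have h3 : -a + c ∈ socle G := by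
      rw [h4, neg_add_cancel_left]
      exact h2
    exact (QuotientAddGroup.eq (s := S)).mpr h3
  haveI : Finite (G ⧸ S) := Finite.of_injective F Finj
  have msmul : ∀ y : X, ∃ m : ℕ, 0 < m ∧ m • ι y ∈ socle G := by
    intro y
    set qy : G ⧸ S := QuotientAddGroup.mk (ι y) with hqy
    refine ⟨addOrderOf qy, addOrderOf_pos qy, ?_⟩
    have h1 : addOrderOf qy • qy = 0 := addOrderOf_nsmul_eq_zero qy
    have h2 : qy = QuotientAddGroup.mk' S (ι y) := rfl
    rw [h2, ← map_nsmul, QuotientAddGroup.mk'_apply, QuotientAddGroup.eq_zero_iff] at h1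
    exact h1
  have comp1 : ∀ x y : X, (sol.r (x,y)).1 = y := by
    intro x y
    obtain ⟨m, hm, hmem⟩ := msmul y
    have h1 : lmap (ι x) (m • ι y) = m • ι y := key2 _ hmem (ι x)
    rw [lmap_nsmul, hG.act] at h1
    have h2 : m • (ι (sol.r (x,y)).1 - ι y) = 0 := by rw [smul_sub, h1, sub_self]
    have h3 := htf m _ hm h2
    rw [sub_eq_zero] at h3
    exact hG.inj h3
  rintro ⟨x, y⟩
  have h1 : (sol.r (x, y)).1 = y := comp1 x y
  have h2 := sol.involutive (x, y)
  have hr : sol.r (x, y) = (y, (sol.r (x, y)).2) := by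
    rw [Prod.ext_iff]; exact ⟨h1, rfl⟩
  rw [hr] at h2
  have h3 : (sol.r (y, (sol.r (x, y)).2)).1 = (sol.r (x, y)).2 := comp1 y _
  have h4 : (sol.r (x, y)).2 = x := by rw [← h3, h2]
  rw [hr, h4]
end

section
/- Let (X,r) be a finite non-degenerate involutive set-theoretic solution of the YBE whose structure group G(X,r) is nilpotent. Then G(X,r) is abelian and (X,r) is the trivial solution. -/
variable {B : Type*} [LeftBrace B]

namespace LBProof

variable {B : Type*} [LeftBrace B]

lemma mul_zero' (a : B) : a * 0 = a := by
  have h := LeftBrace.left_compat a 0 0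
  rw [add_zero] at h
  exact (add_left_cancel h.symm)

lemma one_eq_zero : (1 : B) = 0 := by
  have h := mul_zero' (1 : B)
  rw [one_mul] at h
  exact h.symm

lemma lmap_one (c : B) : lmap (1 : B) c = c := by
  rw [lmap, one_mul, one_eq_zero, sub_zero]

lemma lmap_add (a b c : B) : lmap a (b + c) = lmap a b + lmap a c := by
  have h := LeftBrace.left_compat a b c
  rw [lmap, lmap, lmap, eq_sub_of_add_eq h]
  abel

def lmapHom (a : B) : B →+ B := AddMonoidHom.mk' (lmap a) (lmap_add a)

lemma lmap_sub (a u v : B) : lmap a (u - v) = lmap a u - lmap a v :=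
  map_sub (lmapHom a) u v

lemma lmap_nsmul (a : B) (n : ℕ) (u : B) : lmap a (n • u) = n • lmap a u :=
  map_nsmul (lmapHom a) n u

lemma mul_eq_add_lmap (a b : B) : a * b = a + lmap a b := by
  rw [lmap]; abel

lemma lmap_mul (a b c : B) : lmap (a * b) c = lmap a (lmap b c) := by
  have h : lmap a (lmap b c) = lmap a (b * c) - lmap a b := by
    rw [show lmap b c = b * c - b from rfl, lmap_sub]
  rw [h, lmap, lmap, lmap, mul_assoc]
  abel

lemma lmap_inv_lmap (a c : B) : lmap a⁻¹ (lmap a c) = c := by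
  rw [← lmap_mul, inv_mul_cancel, lmap_one]

lemma lmap_lmap_inv (a c : B) : lmap a (lmap a⁻¹ c) = c := by
  rw [← lmap_mul, mul_inv_cancel, lmap_one]

def socSub (B : Type*) [LeftBrace B] : Subgroup B where
  carrier := {a | ∀ c, lmap a c = c}
  one_mem' := fun c => lmap_one c
  mul_mem' := by
    intro a b ha hb c
    rw [lmap_mul, hb c]; exact ha c
  inv_mem' := by
    intro a ha c
    calc lmap a⁻¹ c = lmap a⁻¹ (lmap a c) := by rw [ha c]
    _ = c := lmap_inv_lmap a c

lemma mem_socSub {a : B} : a ∈ socSub B ↔ ∀ c, lmap a c = c := Iff.rfl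

instance socSub_normal : (socSub B).Normal := by
  constructor
  intro s hs g c
  rw [lmap_mul, lmap_mul, hs (lmap g⁻¹ c), lmap_lmap_inv]

lemma soc_mul_eq_add {a : B} (ha : a ∈ socSub B) (b : B) : a * b = a + b := by
  rw [mul_eq_add_lmap, ha b]

lemma soc_comm {a b : B} (ha : a ∈ socSub B) (hb : b ∈ socSub B) : a * b = b * a := by
  rw [soc_mul_eq_add ha, soc_mul_eq_add hb, add_comm]

lemma soc_neg_eq_inv {a : B} (ha : a ∈ socSub B) : -a = a⁻¹ := by
  have h : a + a⁻¹ = 0 := by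
    rw [← soc_mul_eq_add ha, mul_inv_cancel, one_eq_zero]
  rw [add_comm] at h; exact neg_eq_of_add_eq_zero_left h

lemma soc_pow {a : B} (ha : a ∈ socSub B) (n : ℕ) : a ^ n = n • a := by
  induction n with
  | zero => rw [pow_zero, zero_smul, one_eq_zero]
  | succ n ih =>
    rw [pow_succ', soc_mul_eq_add ha, ih, succ_nsmul, add_comm]

def socAdd (B : Type*) [LeftBrace B] : AddSubgroup B where
  carrier := {a | ∀ c, lmap a c = c}
  zero_mem' := by
    rw [show ((0:B) ∈ {a : B | ∀ c, lmap a c = c}) = ((0:B) ∈ socSub B) from rfl, ← one_eq_zero]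
    exact (socSub B).one_mem
  add_mem' := by
    intro a b ha hb
    have h : a * b ∈ socSub B := (socSub B).mul_mem ha hb
    show ∀ c, lmap (a + b) c = c
    rw [show (a + b) = a * b from (soc_mul_eq_add ha b).symm]
    exact h
  neg_mem' := by
    intro a ha
    show ∀ c, lmap (-a) c = c
    rw [soc_neg_eq_inv ha]
    exact (socSub B).inv_mem ha

lemma mem_socAdd {a : B} : a ∈ socAdd B ↔ a ∈ socSub B := Iff.rfl

lemma conj_soc_eq_lmap {s : B} (hs : s ∈ socSub B) (g : B) : g * s * g⁻¹ = lmap g s := by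
  have h1 : g * s * g⁻¹ = (g * s) + lmap (g * s) g⁻¹ := mul_eq_add_lmap _ _
  have h2 : g * s = g + lmap g s := mul_eq_add_lmap _ _
  have h3 : lmap (g * s) g⁻¹ = lmap g g⁻¹ := by rw [lmap_mul, hs g⁻¹]
  have h4 : g + lmap g g⁻¹ = 0 := by
    rw [← mul_eq_add_lmap, mul_inv_cancel, one_eq_zero]
  rw [h1, h3, h2]
  calc g + lmap g s + lmap g g⁻¹ = lmap g s + (g + lmap g g⁻¹) := by abel
  _ = lmap g s := by rw [h4, add_zero]

lemma lmap_soc_mem {s : B} (hs : s ∈ socSub B) (g : B) : lmap g s ∈ socSub B := by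
  rw [← conj_soc_eq_lmap hs g]
  exact socSub_normal.conj_mem s hs g

variable {G : Type*} [Group G]

lemma comm_pow_right (g h : G)
    (hg : ∀ h' u : G, u * (g * h' * g⁻¹ * h'⁻¹) = (g * h' * g⁻¹ * h'⁻¹) * u) (n : ℕ) :
    g * h ^ n * g⁻¹ * (h ^ n)⁻¹ = (g * h * g⁻¹ * h⁻¹) ^ n := by
  induction n with
  | zero => rw [pow_zero, pow_zero]; group
  | succ n ih =>
    calc g * h ^ (n+1) * g⁻¹ * (h ^ (n+1))⁻¹
        = (g * h ^ n * g⁻¹ * (h ^ n)⁻¹) * ((h ^ n) * (g * h * g⁻¹ * h⁻¹) * (h ^ n)⁻¹) := by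
          group
      _ = (g * h ^ n * g⁻¹ * (h ^ n)⁻¹) * ((g * h * g⁻¹ * h⁻¹) * (h ^ n) * (h ^ n)⁻¹) := by
          rw [hg h (h ^ n)]
      _ = (g * h * g⁻¹ * h⁻¹) ^ n * (g * h * g⁻¹ * h⁻¹) := by rw [ih]; group
      _ = (g * h * g⁻¹ * h⁻¹) ^ (n + 1) := (pow_succ _ n).symm

lemma comm_pow_left (g h : G)
    (hg : ∀ h' u : G, u * (g * h' * g⁻¹ * h'⁻¹) = (g * h' * g⁻¹ * h'⁻¹) * u) (m : ℕ) :
    g ^ m * h * (g ^ m)⁻¹ * h⁻¹ = (g * h * g⁻¹ * h⁻¹) ^ m := by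
  induction m with
  | zero => rw [pow_zero, pow_zero]; group
  | succ m ih =>
    have hcn : g * (g * h * g⁻¹ * h⁻¹) ^ m = (g * h * g⁻¹ * h⁻¹) ^ m * g :=
      Commute.pow_right (hg h g) m
    calc g ^ (m+1) * h * (g ^ (m+1))⁻¹ * h⁻¹
        = g * (g ^ m * h * (g ^ m)⁻¹ * h⁻¹) * g⁻¹ * (g * h * g⁻¹ * h⁻¹) := by group
      _ = g * (g * h * g⁻¹ * h⁻¹) ^ m * g⁻¹ * (g * h * g⁻¹ * h⁻¹) := by rw [ih]
      _ = (g * h * g⁻¹ * h⁻¹) ^ m * g * g⁻¹ * (g * h * g⁻¹ * h⁻¹) := by rw [hcn]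
      _ = (g * h * g⁻¹ * h⁻¹) ^ (m + 1) := by rw [pow_succ]; group

end LBProof

theorem stmt11 {X : Type u} [Finite X] (sol : YBSolution X)
    {G : Type u} [LeftBrace G] (ι : X → G) (hG : IsCanonicalBrace sol G ι)
    (hnilp : Group.IsNilpotent G) :
    (∀ g h : G, g * h = h * g) ∧ (∀ p : X × X, sol.r p = (p.2, p.1)) := by
  classical
  obtain ⟨b, hb⟩ := hG.basis
  -- additive torsion-freeness
  have tf : ∀ (n : ℕ), n ≠ 0 → ∀ u : G, n • u = 0 → u = 0 := by
    intro n hn u hu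
    have h1 : (n : ℤ) • b.repr u = (n : ℤ) • (0 : X →₀ ℤ) := by
      rw [smul_zero, natCast_zsmul, ← map_nsmul, hu, map_zero]
    have h2 : b.repr u = 0 :=
      smul_right_injective (X →₀ ℤ) (by exact_mod_cast hn) h1
    simpa using congrArg b.repr.symm h2
  -- G is generated by the image of ι
  have hcl : ∀ g : G, g ∈ Subgroup.closure (Set.range ι) := by
    intro g
    set H := Subgroup.closure (Set.range ι) with hH
    let f : X → H := fun x => ⟨ι x, Subgroup.subset_closure ⟨x, rfl⟩⟩
    have hfrel : ∀ x y : X, f x * f y = f (sol.r (x, y)).1 * f (sol.r (x, y)).2 := by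
      intro x y
      apply Subtype.ext
      exact hG.rel x y
    obtain ⟨φ, hφ, _⟩ := hG.univ f hfrel
    obtain ⟨ψ, hψ, huniq⟩ := hG.univ ι hG.rel
    have h1 : H.subtype.comp φ = ψ := huniq _ (fun x => by simp [hφ, f])
    have h2 : MonoidHom.id G = ψ := huniq _ (fun x => rfl)
    have h3 : (φ g : G) = g := by
      have : (H.subtype.comp φ) g = (MonoidHom.id G) g := by rw [h1, ← h2]
      simpa using this
    rw [← h3]; exact (φ g).2
  -- every lmap g maps the image of ι into itself
  have hinvgen : ∀ a : G, (∀ y, lmap a (ι y) ∈ Set.range ι) →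
      ∀ y, lmap a⁻¹ (ι y) ∈ Set.range ι := by
    intro a ha y
    have hfin : Finite (Set.range ι) := (Set.finite_range ι).to_subtype
    let uu : Set.range ι → Set.range ι := fun t =>
      ⟨lmap a t.1, by obtain ⟨z, hz⟩ := t.2; rw [← hz]; exact ha z⟩
    have hinj : Function.Injective uu := by
      intro s t hst
      have h1 : lmap a s.1 = lmap a t.1 := congrArg Subtype.val hst
      have h2 := congrArg (lmap a⁻¹) h1
      rw [LBProof.lmap_inv_lmap, LBProof.lmap_inv_lmap] at h2
      exact Subtype.ext h2
    obtain ⟨⟨t, ht⟩, hut⟩ := Finite.injective_iff_surjective.mp hinj ⟨ι y, ⟨y, rfl⟩⟩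
    have h3 : lmap a t = ι y := congrArg Subtype.val hut
    have h4 : lmap a⁻¹ (ι y) = t := by rw [← h3, LBProof.lmap_inv_lmap]
    rw [h4]; exact ht
  have hrange : ∀ g : G, ∀ y : X, lmap g (ι y) ∈ Set.range ι := by
    intro g
    refine Subgroup.closure_induction (k := Set.range ι)
      (p := fun g _ => ∀ y, lmap g (ι y) ∈ Set.range ι) ?_ ?_ ?_ ?_ (hcl g)
    · rintro x ⟨x', rfl⟩ y
      rw [hG.act]; exact ⟨_, rfl⟩
    · intro y; rw [LBProof.lmap_one]; exact ⟨y, rfl⟩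
    · intro a c _ _ ha hc y
      rw [LBProof.lmap_mul]
      obtain ⟨z, hz⟩ := hc y
      rw [← hz]; exact ha z
    · intro a _ ha
      exact hinvgen a ha
  -- lmap is determined by its values on the basis
  have hdet : ∀ u v : G, (∀ y : X, lmap u (ι y) = lmap v (ι y)) → ∀ c, lmap u c = lmap v c := by
    intro u v h c
    have heq : (LBProof.lmapHom u).toIntLinearMap = (LBProof.lmapHom v).toIntLinearMap := by
      apply b.ext
      intro y
      show lmap u (b y) = lmap v (b y)
      rw [hb y]; exact h y
    have := LinearMap.congr_fun heq c
    exact this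
  -- the quotient by the socle is finite
  let F : G → (X → X) := fun g y => (hrange g y).choose
  have hF : ∀ g y, ι (F g y) = lmap g (ι y) := fun g y => (hrange g y).choose_spec
  have hsound : ∀ g h : G, (QuotientGroup.leftRel (LBProof.socSub G)) g h → F g = F h := by
    intro g h hrel
    rw [QuotientGroup.leftRel_apply] at hrel
    have h1 : ∀ c, lmap h c = lmap g c := by
      intro c
      have : lmap h c = lmap g (lmap (g⁻¹ * h) c) := by
        rw [← LBProof.lmap_mul]
        group
      rw [this, hrel c]
    funext y
    apply hG.inj
    rw [hF, hF, h1]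
  haveI hfinQ : Finite (G ⧸ LBProof.socSub G) := by
    have hinj : Function.Injective (Quotient.lift F hsound : G ⧸ LBProof.socSub G → (X → X)) := by
      intro q1 q2
      induction q1 using Quotient.ind with | _ g =>
      induction q2 using Quotient.ind with | _ h =>
      intro hq
      have h1 : ∀ y, lmap g (ι y) = lmap h (ι y) := by
        intro y
        rw [← hF g y, ← hF h y]
        exact congrArg ι (congrFun hq y)
      apply Quotient.sound
      show (QuotientGroup.leftRel (LBProof.socSub G)) g h
      rw [QuotientGroup.leftRel_apply]
      intro c
      have h2 : lmap (g⁻¹ * h) c = lmap g⁻¹ (lmap h c) := LBProof.lmap_mul _ _ _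
      rw [h2, ← hdet g h h1 c, LBProof.lmap_inv_lmap]
    exact Finite.of_injective _ hinj
  set M := Nat.card (G ⧸ LBProof.socSub G) with hMdef
  have hM : M ≠ 0 := Nat.card_pos.ne'
  have hpowM : ∀ g : G, g ^ M ∈ LBProof.socSub G := by
    intro g
    have h1 : (QuotientGroup.mk' (LBProof.socSub G)) (g ^ M) = 1 := by
      rw [map_pow]; exact pow_card_eq_one'
    exact (QuotientGroup.eq_one_iff _).mp h1
  -- the additive quotient by the socle is finite
  haveI hfinQA : Finite (G ⧸ LBProof.socAdd G) := by
    have hiff : ∀ a c : G, (QuotientGroup.leftRel (LBProof.socSub G)) a c ↔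
        (QuotientAddGroup.leftRel (LBProof.socAdd G)) a c := by
      intro a c
      rw [QuotientAddGroup.leftRel_apply, QuotientGroup.leftRel_apply]
      constructor
      · intro hs
        have h1 : a * (a⁻¹ * c) = c := by group
        have h2 : -a + c = lmap a (a⁻¹ * c) := by
          have h3 := LBProof.mul_eq_add_lmap a (a⁻¹ * c)
          rw [h1] at h3
          calc -a + c = -a + (a + lmap a (a⁻¹ * c)) := by rw [← h3]
          _ = lmap a (a⁻¹ * c) := by abel
        rw [LBProof.mem_socAdd, h2]
        exact LBProof.lmap_soc_mem hs a
      · intro ht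
        rw [LBProof.mem_socAdd] at ht
        have h1 : a * (lmap a⁻¹ (-a + c)) = c := by
          rw [LBProof.mul_eq_add_lmap, LBProof.lmap_lmap_inv]; abel
        have h2 : a⁻¹ * c = lmap a⁻¹ (-a + c) := by
          have h4 := congrArg (fun t => a⁻¹ * t) h1
          simpa using h4.symm
        rw [h2]
        exact LBProof.lmap_soc_mem ht a⁻¹
    exact Finite.of_equiv _ (Quotient.congrRight hiff)
  set N := Nat.card (G ⧸ LBProof.socAdd G) with hNdef
  have hN : N ≠ 0 := Nat.card_pos.ne'
  have hsmulN : ∀ g : G, N • g ∈ LBProof.socAdd G := by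
    intro g
    have h1 : (QuotientAddGroup.mk' (LBProof.socAdd G)) (N • g) = 0 := by
      rw [map_nsmul]; exact card_nsmul_eq_zero'
    exact (QuotientAddGroup.eq_zero_iff _).mp h1
  -- central elements lie in the socle
  have hcent : ∀ z : G, z ∈ Subgroup.center G → z ∈ LBProof.socSub G := by
    intro z hz
    have hfix : ∀ s, s ∈ LBProof.socSub G → lmap z s = s := by
      intro s hs
      have h1 : z * s = s * z := (Subgroup.mem_center_iff.mp hz s).symm
      rw [LBProof.mul_eq_add_lmap, LBProof.mul_eq_add_lmap, hs z, add_comm s z] at h1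
      exact add_left_cancel h1
    intro c
    have h2 : lmap z (N • c) = N • c := hfix _ (hsmulN c)
    rw [LBProof.lmap_nsmul] at h2
    have h3 : N • (lmap z c - c) = 0 := by rw [smul_sub, h2, sub_self]
    exact sub_eq_zero.mp (tf N hN _ h3)
  have hsocTF : ∀ a : G, a ∈ LBProof.socSub G → ∀ n : ℕ, n ≠ 0 → a ^ n = 1 → a = 1 := by
    intro a ha n hn h1
    have h2 : n • a = 0 := by rw [← LBProof.soc_pow ha, h1, LBProof.one_eq_zero]
    rw [tf n hn a h2]
    exact LBProof.one_eq_zero.symm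
  -- key step : if all commutators with g are central then g is central
  have hstep : ∀ g : G, (∀ h : G, g * h * g⁻¹ * h⁻¹ ∈ Subgroup.center G) →
      g ∈ Subgroup.center G := by
    intro g hg
    rw [Subgroup.mem_center_iff]
    intro h
    have hgc : ∀ h' u : G, u * (g * h' * g⁻¹ * h'⁻¹) = (g * h' * g⁻¹ * h'⁻¹) * u :=
      fun h' u => Subgroup.mem_center_iff.mp (hg h') u
    have hcomm : (g ^ M) * (h ^ M) * (g ^ M)⁻¹ * ((h ^ M))⁻¹ = 1 := by
      rw [LBProof.soc_comm (hpowM g) (hpowM h)]; group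
    have hgc' : ∀ h' u : G, u * ((g ^ M) * h' * (g ^ M)⁻¹ * h'⁻¹)
        = ((g ^ M) * h' * (g ^ M)⁻¹ * h'⁻¹) * u := by
      intro h' u
      rw [LBProof.comm_pow_left g h' hgc M]
      exact Subgroup.mem_center_iff.mp (pow_mem (hg h') M) u
    have e2 : (g ^ M) * (h ^ M) * (g ^ M)⁻¹ * ((h ^ M))⁻¹ = ((g * h * g⁻¹ * h⁻¹) ^ M) ^ M := by
      rw [LBProof.comm_pow_right (g ^ M) h hgc' M, LBProof.comm_pow_left g h hgc M]
    have e3 : (g * h * g⁻¹ * h⁻¹) ^ (M * M) = 1 := by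
      rw [pow_mul, ← e2]; exact hcomm
    have e4 : g * h * g⁻¹ * h⁻¹ = 1 :=
      hsocTF _ (hcent _ (hg h)) (M * M) (Nat.mul_ne_zero hM hM) e3
    have e5 : g * h * g⁻¹ = h := mul_inv_eq_one.mp e4
    have e6 : g * h = h * g := mul_inv_eq_iff_eq_mul.mp e5
    exact e6.symm
  have hUCS : ∀ m : ℕ, Subgroup.upperCentralSeries G m ≤ Subgroup.center G := by
    intro m
    induction m with
    | zero => rw [Subgroup.upperCentralSeries_zero]; exact bot_le
    | succ m ih =>
      intro g hgm
      exact hstep g (fun h => ih (Subgroup.mem_upperCentralSeries_succ_iff.mp hgm h))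
  obtain ⟨n, hn⟩ := hnilp.nilpotent'
  have habel : ∀ g h : G, g * h = h * g := by
    intro g h
    have hgZ : g ∈ Subgroup.center G :=
      hUCS n (by rw [hn]; exact Subgroup.mem_top g)
    exact (Subgroup.mem_center_iff.mp hgZ h).symm
  -- the solution is trivial
  have hr1 : ∀ x y : X, x ≠ y → (sol.r (x, y)).1 = y := by
    intro x y hxy
    have e1 : ι x + ι (sol.r (x, y)).1 = ι y + ι (sol.r (y, x)).1 := by
      have h1 : ι x * ι y = ι x + ι (sol.r (x, y)).1 := by
        rw [LBProof.mul_eq_add_lmap, hG.act]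
      have h2 : ι y * ι x = ι y + ι (sol.r (y, x)).1 := by
        rw [LBProof.mul_eq_add_lmap, hG.act]
      rw [← h1, ← h2]; exact habel _ _
    have e2 : b.repr (b x + b (sol.r (x, y)).1) = b.repr (b y + b (sol.r (y, x)).1) := by
      rw [hb, hb, hb, hb]; exact congrArg _ e1
    rw [map_add, map_add, Module.Basis.repr_self, Module.Basis.repr_self, Module.Basis.repr_self,
      Module.Basis.repr_self] at e2
    have e3 := DFunLike.congr_fun e2 y
    rw [Finsupp.add_apply, Finsupp.add_apply, Finsupp.single_apply, Finsupp.single_apply,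
      Finsupp.single_apply, Finsupp.single_apply] at e3
    by_contra hne
    rw [if_neg hxy, if_neg hne, if_pos rfl] at e3
    split_ifs at e3 <;> omega
  have hr2 : ∀ x y : X, x ≠ y → (sol.r (x, y)).2 = x := by
    intro x y hxy
    have h1 := hG.rel x y
    rw [hr1 x y hxy] at h1
    have h2 : ι y * ι x = ι y * ι (sol.r (x, y)).2 := by
      rw [← h1, habel]
    exact (hG.inj (mul_left_cancel h2)).symm
  have hd1 : ∀ x : X, (sol.r (x, x)).1 = x := by
    intro x
    by_contra hne
    have hinj := (sol.nondegL x).1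
    have h1 : (sol.r (x, (sol.r (x, x)).1)).1 = (sol.r (x, x)).1 :=
      hr1 x _ (fun hh => hne hh.symm)
    have h2 : (fun y => (sol.r (x, y)).1) (sol.r (x, x)).1 = (fun y => (sol.r (x, y)).1) x := by
      simpa using h1
    exact hne (hinj h2)
  have hd2 : ∀ x : X, (sol.r (x, x)).2 = x := by
    intro x
    have h1 := hG.rel x x
    rw [hd1 x] at h1
    exact (hG.inj (mul_left_cancel h1)).symm
  refine ⟨habel, ?_⟩
  rintro ⟨x, y⟩
  by_cases hxy : x = y
  · subst hxy
    exact Prod.ext (hd1 x) (hd2 x)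
  · exact Prod.ext (hr1 x y hxy) (hr2 x y hxy)
end

section
/- Every finite nilpotent group is isomorphic to a subgroup of the adjoint group of a finite nilpotent ring. -/
def listMul {R : Type*} [Mul R] : R → List R → R
  | x, [] => x
  | x, y :: l => listMul (x * y) l

/-- A nilpotent ring: all products of sufficiently many elements vanish. -/
def IsNilRing (R : Type*) (i : NonUnitalRing R) : Prop :=
  letI := i
  ∃ n : ℕ, ∀ (x : R) (l : List R), l.length = n → listMul x l = 0

/-- `G` is isomorphic to a subgroup of the adjoint group `(R, ∘)`,
`a ∘ b = a + b + ab`, of the ring `R`. -/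
def AdjointEmbedding (G : Type*) [Group G] (R : Type*) (i : NonUnitalRing R) : Prop :=
  letI := i
  ∃ f : G → R, Function.Injective f ∧ f 1 = 0 ∧
    ∀ g h : G, f (g * h) = f g + f h + f g * f h

set_option linter.unusedSectionVars false

theorem listMul_append {R : Type*} [Mul R] (x : R) (l₁ l₂ : List R) :
    listMul x (l₁ ++ l₂) = listMul (listMul x l₁) l₂ := by
  induction l₁ generalizing x with
  | nil => rfl
  | cons y l ih => simp [listMul, ih]

theorem listMul_zero {R : Type*} [MulZeroClass R] (l : List R) : listMul 0 l = 0 := by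
  induction l with
  | nil => rfl
  | cons y l ih => simpa [listMul] using ih

theorem listMul_eq_foldr {R : Type*} [Monoid R] (x : R) (l : List R) :
    listMul x l = x * l.foldr (· * ·) 1 := by
  induction l generalizing x with
  | nil => simp [listMul]
  | cons y l ih => simp [listMul, ih, mul_assoc]

theorem listMul_pi {ι : Type*} {R : ι → Type*} [∀ i, Mul (R i)] (x : ∀ i, R i)
    (l : List (∀ i, R i)) (i : ι) :
    listMul x l i = listMul (x i) (l.map fun y => y i) := by
  induction l generalizing x with
  | nil => rfl
  | cons y l ih => simpa [listMul] using ih (x * y)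

theorem listMul_subring {A : Type*} [NonUnitalRing A] (S : NonUnitalSubring A)
    (x : S) (l : List S) :
    ((listMul x l : S) : A) = listMul (x : A) (l.map (Subtype.val)) := by
  induction l generalizing x with
  | nil => rfl
  | cons y l ih => simpa [listMul] using ih (x * y)

set_option linter.unusedSectionVars false

open MonoidAlgebra

variable (p : ℕ) [Fact p.Prime] (P : Type v) [Group P]

noncomputable def aug : MonoidAlgebra (ZMod p) P →ₐ[ZMod p] ZMod p :=
  MonoidAlgebra.lift (ZMod p) (ZMod p) P 1

theorem aug_of (g : P) : aug p P (MonoidAlgebra.of (ZMod p) P g) = 1 := by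
  simp [aug]

theorem aug_apply (x : MonoidAlgebra (ZMod p) P) : aug p P x = x.coeff.sum fun _ c => c := by
  rw [aug, MonoidAlgebra.lift_apply]
  simp

noncomputable def Vsucc (W : Ideal (MonoidAlgebra (ZMod p) P)) :
    Ideal (MonoidAlgebra (ZMod p) P) where
  carrier := {a | ∀ x : MonoidAlgebra (ZMod p) P, aug p P x = 0 → x * a ∈ W}
  add_mem' := fun ha hb x hx => by
    rw [mul_add]; exact W.add_mem (ha x hx) (hb x hx)
  zero_mem' := fun x hx => by rw [mul_zero]; exact W.zero_mem
  smul_mem' := fun b a ha x hx => by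
    rw [smul_eq_mul, ← mul_assoc]
    exact ha (x * b) (by rw [map_mul, hx, zero_mul])

theorem mem_Vsucc {W : Ideal (MonoidAlgebra (ZMod p) P)} {a : MonoidAlgebra (ZMod p) P} :
    a ∈ Vsucc p P W ↔ ∀ x : MonoidAlgebra (ZMod p) P, aug p P x = 0 → x * a ∈ W :=
  Iff.rfl

noncomputable def Vchain : ℕ → Ideal (MonoidAlgebra (ZMod p) P)
  | 0 => ⊥
  | j + 1 => Vsucc p P (Vchain j)

theorem Vchain_mono (j : ℕ) : Vchain p P j ≤ Vchain p P (j + 1) := by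
  induction j with
  | zero => exact bot_le
  | succ j ih =>
    intro a ha
    rw [Vchain, mem_Vsucc] at ha ⊢
    exact fun x hx => ih (ha x hx)

variable [Finite P]

theorem finA : Finite (MonoidAlgebra (ZMod p) P) := by
  have h1 : Finite (P →₀ ZMod p) :=
    Finite.of_injective (fun x : P →₀ ZMod p => (x : P → ZMod p)) DFunLike.coe_injective
  exact Finite.of_equiv (P →₀ ZMod p) MonoidAlgebra.coeffEquiv.symm

theorem Vchain_strict (hP : IsPGroup p P) (j : ℕ) (h : Vchain p P j ≠ ⊤) :
    ∃ a, a ∈ Vchain p P (j + 1) ∧ a ∉ Vchain p P j := by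
  classical
  haveI : Finite (MonoidAlgebra (ZMod p) P) := finA p P
  set A := MonoidAlgebra (ZMod p) P with hA
  set W := Vchain p P j with hW
  set M := A ⧸ W with hM
  haveI : Nontrivial M := by
    rw [← not_subsingleton_iff_nontrivial]
    exact fun hs => h ((Submodule.Quotient.subsingleton_iff (p := W)).mp hs)
  haveI : Finite M := Finite.of_surjective _ (Submodule.Quotient.mk_surjective W)
  letI actP : MulAction P M :=
    { smul := fun g m => MonoidAlgebra.of (ZMod p) P g • m
      one_smul := fun m => by
        show MonoidAlgebra.of (ZMod p) P 1 • m = m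
        rw [map_one, one_smul]
      mul_smul := fun g h m => by
        show MonoidAlgebra.of (ZMod p) P (g * h) • m = _
        rw [map_mul, mul_smul]; rfl }
  have hp' : p.Prime := Fact.out
  -- every element of M is killed by p
  have hpsmul : ∀ m : M, p • m = 0 := by
    intro m
    obtain ⟨a, rfl⟩ := Submodule.Quotient.mk_surjective W m
    show p • W.mkQ a = 0
    rw [← map_nsmul W.mkQ p a]
    have : (p : ℕ) • a = 0 := by
      rw [← Nat.cast_smul_eq_nsmul (ZMod p) p a, ZMod.natCast_self, zero_smul]
    rw [this, map_zero]
  -- p divides the cardinality of M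
  have hcard : p ∣ Nat.card M := by
    haveI := Fintype.ofFinite M
    rw [Nat.card_eq_fintype_card]
    have h1 : Fintype.card M ≠ 1 := by
      have := Fintype.one_lt_card (α := M)
      omega
    obtain ⟨q, hq, hqd⟩ := Nat.exists_prime_and_dvd h1
    haveI : Fact q.Prime := ⟨hq⟩
    obtain ⟨x, hx⟩ := exists_prime_addOrderOf_dvd_card q hqd
    have hdvd : addOrderOf x ∣ p := addOrderOf_dvd_of_nsmul_eq_zero (hpsmul x)
    rw [hx] at hdvd
    rwa [(Nat.prime_dvd_prime_iff_eq hq hp').mp hdvd] at hqd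
  -- key computation: elements of the augmentation ideal kill fixed points
  have key : ∀ x : A, aug p P x = 0 → ∀ m : M,
      (∀ g : P, MonoidAlgebra.of (ZMod p) P g • m = m) → x • m = 0 := by
    intro x hx m hm
    have step : ∀ g : P, ∀ c : ZMod p,
        (MonoidAlgebra.single g c : A) • m = (MonoidAlgebra.single 1 c : A) • m := by
      intro g c
      have : (MonoidAlgebra.single g c : A)
          = (MonoidAlgebra.single 1 c : A) * MonoidAlgebra.of (ZMod p) P g := by
        rw [MonoidAlgebra.of_apply, MonoidAlgebra.single_mul_single, one_mul, mul_one]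
      rw [this, mul_smul, hm g]
    have expand : x • m = (MonoidAlgebra.single 1 (aug p P x) : A) • m := by
      conv_lhs => rw [← MonoidAlgebra.sum_coeff_single x]
      rw [Finsupp.sum, Finset.sum_smul]
      have : ∀ g ∈ x.coeff.support, (MonoidAlgebra.single g (x.coeff g) : A) • m
          = (MonoidAlgebra.single (1 : P) (x.coeff g) : A) • m := fun g _ => step g (x.coeff g)
      rw [Finset.sum_congr rfl this, ← Finset.sum_smul]
      have hs : (∑ i ∈ x.coeff.support, (MonoidAlgebra.single (1 : P) (x.coeff i) : A))
          = MonoidAlgebra.single (1 : P) (∑ i ∈ x.coeff.support, x.coeff i) := by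
        exact (map_sum (MonoidAlgebra.singleAddHom (1 : P)) (fun i => x.coeff i) x.coeff.support).symm
      rw [hs, aug_apply, Finsupp.sum]
    rw [expand, hx, MonoidAlgebra.single_zero, zero_smul]
  -- fixed points
  have hmod := hP.card_modEq_card_fixedPoints M
  have h0 : (0 : M) ∈ MulAction.fixedPoints P M := by
    intro g
    show MonoidAlgebra.of (ZMod p) P g • (0 : M) = 0
    rw [smul_zero]
  have hfpcard : p ∣ Nat.card (MulAction.fixedPoints P M) := by
    have := (Nat.modEq_zero_iff_dvd).mpr hcard
    exact (Nat.modEq_zero_iff_dvd).mp (hmod.symm.trans this)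
  haveI : Nontrivial (MulAction.fixedPoints P M) := by
    rw [← Finite.one_lt_card_iff_nontrivial]
    have pos : 0 < Nat.card (MulAction.fixedPoints P M) :=
      Nat.card_pos_iff.mpr ⟨⟨⟨0, h0⟩⟩, Set.toFinite _⟩
    have := Nat.le_of_dvd pos hfpcard
    have := hp'.two_le
    omega
  obtain ⟨mfp, hmne⟩ := exists_ne (⟨0, h0⟩ : MulAction.fixedPoints P M)
  have hm0 : (mfp : M) ≠ 0 := fun hh => hmne (Subtype.ext hh)
  have hmfix : ∀ g : P, MonoidAlgebra.of (ZMod p) P g • (mfp : M) = (mfp : M) := mfp.2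
  obtain ⟨a, ha⟩ := Submodule.Quotient.mk_surjective W (mfp : M)
  refine ⟨a, ?_, ?_⟩
  · rw [Vchain, mem_Vsucc]
    intro x hx
    have hz : x • (mfp : M) = 0 := key x hx _ hmfix
    rw [← ha, ← Submodule.Quotient.mk_smul, Submodule.Quotient.mk_eq_zero] at hz
    rwa [smul_eq_mul] at hz
  · intro hWa
    exact hm0 (by rw [← ha]; exact (Submodule.Quotient.mk_eq_zero W).mpr hWa)

theorem Vchain_top (hP : IsPGroup p P) :
    Vchain p P (Nat.card (MonoidAlgebra (ZMod p) P)) = ⊤ := by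
  classical
  haveI : Finite (MonoidAlgebra (ZMod p) P) := finA p P
  set A := MonoidAlgebra (ZMod p) P with hA
  have grow : ∀ j : ℕ, Vchain p P j = ⊤ ∨ j + 1 ≤ Nat.card (Vchain p P j) := by
    intro j
    induction j with
    | zero =>
      right
      have : Nat.card (Vchain p P 0) = 1 := by
        rw [show Vchain p P 0 = ⊥ from rfl]
        rw [Nat.card_eq_one_iff_unique]
        constructor
        · exact ⟨fun a b => Subtype.ext (by
            rw [(Submodule.mem_bot A).mp a.2, (Submodule.mem_bot A).mp b.2])⟩
        · exact ⟨⟨0, Submodule.zero_mem _⟩⟩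
      omega
    | succ j ih =>
      rcases eq_or_ne (Vchain p P j) ⊤ with hj | hj
      · left
        exact top_unique (hj ▸ Vchain_mono p P j)
      · right
        obtain ⟨a, haS, haN⟩ := Vchain_strict p P hP j hj
        have hss : (Vchain p P j : Set A) ⊂ (Vchain p P (j + 1) : Set A) :=
          ⟨Vchain_mono p P j, fun hsub => haN (hsub haS)⟩
        have hlt : Nat.card (Vchain p P j) < Nat.card (Vchain p P (j + 1)) := by
          rw [← SetLike.coe_sort_coe, ← SetLike.coe_sort_coe,
            Nat.card_coe_set_eq, Nat.card_coe_set_eq]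
          exact Set.ncard_lt_ncard hss (Set.toFinite _)
        rcases ih with h | h
        · exact absurd h hj
        · omega
  rcases grow (Nat.card A) with h | h
  · exact h
  · exfalso
    have hle : Nat.card (Vchain p P (Nat.card A)) ≤ Nat.card A := by
      rw [← SetLike.coe_sort_coe, Nat.card_coe_set_eq]
      calc ((Vchain p P (Nat.card A) : Set A)).ncard ≤ (Set.univ : Set A).ncard :=
            Set.ncard_le_ncard (Set.subset_univ _) Set.finite_univ
        _ = Nat.card A := Set.ncard_univ A
    omega

theorem foldr_mem_Vchain (l : List (MonoidAlgebra (ZMod p) P))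
    (hl : ∀ y ∈ l, aug p P y = 0) (j : ℕ) (a : MonoidAlgebra (ZMod p) P)
    (ha : a ∈ Vchain p P (l.length + j)) :
    l.foldr (· * ·) a ∈ Vchain p P j := by
  induction l generalizing j with
  | nil => simpa using ha
  | cons y l ih =>
    have ha' : a ∈ Vchain p P (l.length + (j + 1)) := by
      have : l.length + (j + 1) = (y :: l).length + j := by simp; omega
      rwa [this]
    have hf := ih (fun z hz => hl z (List.mem_cons_of_mem y hz)) (j + 1) ha'
    rw [Vchain, mem_Vsucc] at hf
    exact hf y (hl y (List.mem_cons_self (a := y) (l := l)))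

noncomputable def augSubring : NonUnitalSubring (MonoidAlgebra (ZMod p) P) where
  carrier := {x | aug p P x = 0}
  add_mem' := fun ha hb => by simp_all [map_add]
  zero_mem' := by simp
  mul_mem' := fun ha hb => by simp_all [map_mul]
  neg_mem' := fun ha => by simp_all [map_neg]

theorem pgroup_adjoint (hP : IsPGroup p P) :
    ∃ (R : Type v) (i : NonUnitalRing R),
      Finite R ∧ IsNilRing R i ∧ AdjointEmbedding P R i := by
  classical
  haveI : Finite (MonoidAlgebra (ZMod p) P) := finA p P
  haveI : Fact (1 < p) := ⟨(Fact.out : p.Prime).one_lt⟩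
  set A := MonoidAlgebra (ZMod p) P with hA
  set S := augSubring p P with hS
  refine ⟨S, inferInstance, Subtype.finite, ?_, ?_⟩
  · -- nilpotency
    refine ⟨Nat.card A, fun x l hl => ?_⟩
    have hmem : ∀ y : S, aug p P (y : A) = 0 := fun y => y.2
    have hco : ((listMul x l : S) : A) = listMul (x : A) (l.map Subtype.val) :=
      listMul_subring S x l
    have hfold : listMul (x : A) (l.map Subtype.val)
        = ((x : A) :: l.map Subtype.val).foldr (· * ·) 1 := by
      rw [List.foldr_cons, ← listMul_eq_foldr]
    have h1top : (1 : A) ∈ Vchain p P (((x : A) :: l.map Subtype.val).length + 0) := by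
      have hlen : ((x : A) :: l.map Subtype.val).length + 0 = Nat.card A + 1 := by
        simp [hl]
      rw [hlen]
      exact Vchain_mono p P _ (by rw [Vchain_top p P hP]; trivial)
    have := foldr_mem_Vchain p P ((x : A) :: l.map Subtype.val)
      (fun y hy => by
        rcases List.mem_cons.mp hy with h | h
        · rw [h]; exact x.2
        · obtain ⟨z, _, rfl⟩ := List.mem_map.mp h; exact z.2)
      0 1 h1top
    rw [show Vchain p P 0 = ⊥ from rfl, Submodule.mem_bot] at this
    have : ((listMul x l : S) : A) = 0 := by rw [hco, hfold]; exact this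
    exact_mod_cast Subtype.ext this
  · -- adjoint embedding
    refine ⟨fun g => ⟨MonoidAlgebra.of (ZMod p) P g - 1, ?_⟩, ?_, ?_, ?_⟩
    · show aug p P _ = 0
      rw [map_sub, aug_of, map_one, sub_self]
    · intro g h hgh
      have : MonoidAlgebra.of (ZMod p) P g - 1 = MonoidAlgebra.of (ZMod p) P h - 1 :=
        congrArg Subtype.val hgh
      exact MonoidAlgebra.of_injective (sub_left_injective this)
    · refine Subtype.ext ?_
      push_cast
      rw [map_one, sub_self]
    · intro g h
      apply Subtype.ext
      push_cast
      rw [map_mul]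
      noncomm_ring

theorem listMul_long_zero {R : Type*} [NonUnitalRing R] {n : ℕ}
    (hn : ∀ (x : R) (l : List R), l.length = n → listMul x l = 0)
    {N : ℕ} (hN : n ≤ N) (x : R) (l : List R) (hl : l.length = N) :
    listMul x l = 0 := by
  have hsplit : l = l.take n ++ l.drop n := (List.take_append_drop n l).symm
  rw [hsplit, listMul_append, hn x (l.take n) (by rw [List.length_take]; omega),
    listMul_zero]

theorem pi_adjoint {ι : Type w} [Finite ι] (H : ι → Type v) [∀ i, Group (H i)]
    (h : ∀ i, ∃ (R : Type v) (iR : NonUnitalRing R),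
      Finite R ∧ IsNilRing R iR ∧ AdjointEmbedding (H i) R iR) :
    ∃ (R : Type max w v) (iR : NonUnitalRing R),
      Finite R ∧ IsNilRing R iR ∧ AdjointEmbedding (∀ i, H i) R iR := by
  classical
  choose R iR hfin hnil hemb using h
  letI : ∀ i, NonUnitalRing (R i) := iR
  haveI : ∀ i, Finite (R i) := hfin
  haveI := Fintype.ofFinite ι
  choose n hn using hnil
  choose f hfinj hf1 hfm using hemb
  refine ⟨∀ i, R i, inferInstance, inferInstance, ?_, ?_⟩
  · refine ⟨Finset.univ.sup n, fun x l hl => ?_⟩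
    funext i
    rw [listMul_pi]
    have : (l.map fun y => y i).length = Finset.univ.sup n := by
      rw [List.length_map, hl]
    exact listMul_long_zero (hn i) (Finset.le_sup (Finset.mem_univ i)) (x i) _ this
  · refine ⟨fun g i => f i (g i), ?_, ?_, ?_⟩
    · intro g h hgh
      funext i
      exact hfinj i (congrFun hgh i)
    · funext i
      exact hf1 i
    · intro g h
      funext i
      exact hfm i (g i) (h i)

theorem adjoint_of_mulEquiv {G G' : Type*} [Group G] [Group G'] (e : G ≃* G')
    {R : Type*} (i : NonUnitalRing R) (h : AdjointEmbedding G' R i) :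
    AdjointEmbedding G R i := by
  obtain ⟨f, hinj, h1, hm⟩ := h
  exact ⟨f ∘ e, hinj.comp e.injective, by simp [map_one e, h1],
    fun g h => by simp [map_mul e, hm]⟩

theorem shrink_adjoint {G : Type*} [Group G] {R : Type v} (i : NonUnitalRing R)
    (h1 : Finite R) (h2 : IsNilRing R i) (h3 : AdjointEmbedding G R i) :
    ∃ (R' : Type) (i' : NonUnitalRing R'),
      Finite R' ∧ IsNilRing R' i' ∧ AdjointEmbedding G R' i' := by
  letI := i
  haveI := h1
  haveI : Small.{0} R := Countable.toSmall R
  let e : Shrink.{0} R ≃ R := (equivShrink R).symm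
  have hemul : ∀ x y : Shrink.{0} R, e (x * y) = e x * e y := by
    intro x y
    show e (e.symm (e x * e y)) = e x * e y
    exact e.apply_symm_apply _
  have headd : ∀ x y : Shrink.{0} R, e (x + y) = e x + e y := by
    intro x y
    show e (e.symm (e x + e y)) = e x + e y
    exact e.apply_symm_apply _
  have hezero : e 0 = 0 := by
    show e (e.symm 0) = 0
    exact e.apply_symm_apply _
  have helist : ∀ (l : List (Shrink.{0} R)) (x : Shrink.{0} R),
      e (listMul x l) = listMul (e x) (l.map e) := by
    intro l
    induction l with
    | nil => intro x; rfl
    | cons y l ih =>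
      intro x
      have h1 : listMul x (y :: l) = listMul (x * y) l := rfl
      have h2 : listMul (e x) ((y :: l).map e) = listMul (e x * e y) (l.map e) := rfl
      rw [h1, h2, ih, hemul]
  refine ⟨Shrink.{0} R, inferInstance, Finite.of_equiv R e.symm, ?_, ?_⟩
  · obtain ⟨n, hn⟩ := h2
    refine ⟨n, fun x l hl => ?_⟩
    apply e.injective
    rw [helist, hezero]
    exact hn (e x) (l.map e) (by rw [List.length_map, hl])
  · obtain ⟨f, hinj, hf1, hfm⟩ := h3
    refine ⟨e.symm ∘ f, (e.symm.injective.comp hinj), ?_, ?_⟩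
    · show e.symm (f 1) = 0
      rw [hf1]
      apply e.injective
      rw [e.apply_symm_apply, hezero]
    · intro g h
      apply e.injective
      show e (e.symm (f (g * h))) = _
      rw [e.apply_symm_apply, hfm, headd, headd, hemul]
      simp only [Function.comp_apply, e.apply_symm_apply]

theorem stmt18 (G : Type u) [Group G] [Finite G] (hG : Group.IsNilpotent G) :
    ∃ (R : Type) (i : NonUnitalRing R),
      Finite R ∧ IsNilRing R i ∧ AdjointEmbedding G R i := by
  obtain ⟨e⟩ := ((isNilpotent_of_finite_tfae (G := G)).out 0 4).mp hG
  have h1 : ∀ p : (Nat.card G).primeFactors,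
      ∃ (R : Type u) (iR : NonUnitalRing R), Finite R ∧ IsNilRing R iR ∧
        AdjointEmbedding (∀ P : Sylow (p : ℕ) G, (P : Subgroup G)) R iR := by
    intro p
    haveI : Fact (p : ℕ).Prime := ⟨Nat.prime_of_mem_primeFactors p.2⟩
    exact pi_adjoint (fun P : Sylow (p : ℕ) G => ((P : Subgroup G) : Type u))
      (fun P => pgroup_adjoint (p : ℕ) (P : Subgroup G) P.isPGroup')
  obtain ⟨R, iR, hfin, hnil, hemb⟩ := pi_adjoint _ h1
  exact shrink_adjoint iR hfin hnil (adjoint_of_mulEquiv e.symm iR hemb)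
end

section
/- Let B be a left brace whose additive group is torsion-free, let a,b ∈ B with L_{a^n} = id for some positive integer n, and define e_1(a,b) = a*b, e_{k+1}(a,b) = a*e_k(a,b). Then for every positive integer k, n·e_k(a,b) = -Σ_{i=2}^n C(n,i) e_{i+k-1}(a,b). -/
variable {B : Type*} [LeftBrace B]

/-- `lmap a` as an additive endomorphism. -/
def Lend (a : B) : AddMonoid.End B where
  toFun := lmap a
  map_zero' := by
    have h := LeftBrace.left_compat a 0 0
    rw [add_zero] at h
    have h2 : a * 0 = a := (add_left_cancel h).symm
    simp [lmap, h2]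
  map_add' := fun x y => by
    have h := LeftBrace.left_compat a x y
    simp only [lmap]
    linear_combination (norm := abel) h

lemma Lend_apply (a c : B) : Lend a c = a * c - a := rfl

lemma brace_one_eq_zero : (1 : B) = 0 := by
  have h := LeftBrace.left_compat (1 : B) 0 0
  simpa using h

lemma Lend_mul (x y : B) : Lend (x * y) = Lend x * Lend y := by
  refine AddMonoidHom.ext fun c => ?_
  have h : (Lend x) (y * c - y) = (Lend x) (y * c) - (Lend x) y := map_sub _ _ _
  simp only [Lend_apply] at h
  show lmap (x * y) c = (Lend x) ((Lend y) c)
  simp only [Lend_apply, lmap]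
  calc x * y * c - x * y = x * (y * c) - x * y := by rw [mul_assoc]
    _ = x * (y * c - y) - x := by rw [h]; abel

lemma Lend_pow_eq (a : B) (n : ℕ) : Lend (a ^ n) = (Lend a) ^ n := by
  induction n with
  | zero =>
    refine AddMonoidHom.ext fun c => ?_
    show lmap (a ^ 0) c = c
    simp [lmap, brace_one_eq_zero]
  | succ m ih => rw [pow_succ, Lend_mul, ih, pow_succ]

lemma eStar_eq (a b : B) (k : ℕ) : eStar a b k = ((Lend a - 1) ^ k) b := by
  induction k with
  | zero => simp [eStar]
  | succ m ih =>
    rw [eStar, ih, pow_succ']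
    have h1 : ((Lend a - 1) * (Lend a - 1) ^ m) b
        = (Lend a) (((Lend a - 1) ^ m) b) - ((Lend a - 1) ^ m) b := rfl
    rw [h1]
    simp only [bstar, Lend_apply]

theorem stmt19 {B : Type*} [LeftBrace B]
    (htf : ∀ (x : B) (k : ℕ), 0 < k → k • x = 0 → x = 0)
    (a b : B) (n : ℕ) (hn : 0 < n) (hL : ∀ c : B, lmap (a ^ n) c = c) :
    ∀ k : ℕ, 1 ≤ k →
      n • eStar a b k = -∑ i ∈ Finset.Icc 2 n, (n.choose i) • eStar a b (i + k - 1) := by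
  intro k hk
  set T : AddMonoid.End B := Lend a - 1 with hT
  have hTn : (Lend a) ^ n = 1 := by
    refine AddMonoidHom.ext fun c => ?_
    rw [← Lend_pow_eq]
    show lmap (a ^ n) c = c
    exact hL c
  have hbin : (1 + T) ^ n = 1 := by
    have h1 : (1 : AddMonoid.End B) + T = Lend a := by rw [hT]; abel
    rw [h1, hTn]
  have hsum : ∑ i ∈ Finset.range (n + 1), n.choose i • T ^ i = 1 := by
    have h := (Commute.one_right T).add_pow n
    rw [add_comm T 1, hbin] at h
    refine Eq.trans ?_ h.symm
    refine Finset.sum_congr rfl fun i hi => ?_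
    rw [one_pow, mul_one, nsmul_eq_mul]
    exact (Nat.cast_commute _ _).eq
  obtain ⟨m, rfl⟩ : ∃ m, n = m + 1 := ⟨n - 1, (Nat.succ_pred_eq_of_pos hn).symm⟩
  rw [Finset.sum_range_succ', Finset.sum_range_succ'] at hsum
  simp only [pow_zero, Nat.choose_zero_right, one_smul, Nat.choose_one_right, pow_one] at hsum
  have hkey : (m + 1) • T + ∑ i ∈ Finset.range m, (m + 1).choose (i + 1 + 1) • T ^ (i + 1 + 1) = 0 := by
    have h2 := hsum
    simp only [zero_add, pow_one, Nat.choose_one_right] at h2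
    rw [add_comm]
    exact add_eq_right.mp h2
  have hmul := congrArg (fun f : AddMonoid.End B => f * T ^ (k - 1)) hkey
  simp only [add_mul, smul_mul_assoc, Finset.sum_mul, zero_mul, ← pow_succ'] at hmul
  have hk1 : k - 1 + 1 = k := by omega
  rw [hk1] at hmul
  have hfin : (m + 1) • T ^ k
      + ∑ i ∈ Finset.Icc 2 (m + 1), (m + 1).choose i • T ^ (i + k - 1) = 0 := by
    rw [← hmul]
    congr 1
    rw [← Finset.Ico_add_one_right_eq_Icc, Finset.sum_Ico_eq_sum_range]
    have hm : m + 1 + 1 - 2 = m := by omega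
    rw [hm]
    refine Finset.sum_congr rfl fun i hi => ?_
    congr 1
    · congr 1; omega
    · rw [← pow_add]; congr 1; omega
  have hsumapp : ∀ (s : Finset ℕ) (f : ℕ → AddMonoid.End B), (∑ i ∈ s, f i) b = ∑ i ∈ s, f i b := by
    intro s f
    induction s using Finset.cons_induction with
    | empty => rfl
    | cons i s hi ih => rw [Finset.sum_cons, Finset.sum_cons, ← ih]; rfl
  have hev : ∀ (c : ℕ) (j : ℕ), ((c • T ^ j : AddMonoid.End B)) b = c • ((T ^ j) b) := by
    intro c j; rfl
  have happ : (m + 1) • ((T ^ k) b)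
      + ∑ i ∈ Finset.Icc 2 (m + 1), (m + 1).choose i • ((T ^ (i + k - 1)) b) = 0 := by
    have h := congrArg (fun f : AddMonoid.End B => f b) hfin
    have hadd : ((m + 1) • T ^ k + ∑ i ∈ Finset.Icc 2 (m + 1),
        (m + 1).choose i • T ^ (i + k - 1) : AddMonoid.End B) b
        = ((m + 1) • T ^ k : AddMonoid.End B) b + (∑ i ∈ Finset.Icc 2 (m + 1),
          (m + 1).choose i • T ^ (i + k - 1) : AddMonoid.End B) b := rfl
    rw [hadd, hev, hsumapp] at h
    simp only [hev] at h
    exact h.trans rfl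
  have hres : (m + 1) • ((T ^ k) b)
      = -∑ i ∈ Finset.Icc 2 (m + 1), (m + 1).choose i • ((T ^ (i + k - 1)) b) :=
    eq_neg_of_add_eq_zero_left happ
  rw [eStar_eq a b k, ← hT, hres]
  congr 1
  exact Finset.sum_congr rfl fun i _ => by rw [eStar_eq a b (i + k - 1), ← hT]
end
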